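/- Let R = (R_i)_{i∈Ā} be an ε̄-local optimum with respect to the endowed valuations v̄_i, with prices p_j as defined. Then for every agent i ∈ Ā and every set S ⊆ J, v_i(S) / max{ v_i(R_i), v_i(ℓ(i)) } ≤ −1 + 2·(1+ε̄)^{|S|/w_i} · e^{p(S)/w_i}. -/

import Mathlib

open Finset

/-- (Price bound for arbitrary sets, asymmetric case.)
For an `ε̄`-local optimum `R` with prices `p`, for every agent `i` and every `S ⊆ J`,
`v_i(S) / max{v_i(R_i), v_i(ℓ(i))} ≤ −1 + 2·(1+ε̄)^{|S|/w_i} · e^{p(S)/w_i}`. -/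
theorem asymmetric_price_bound {J A : Type*} [Fintype J] [DecidableEq J]
    [Fintype A] [Nonempty A]
    (w : A → ℝ) (hw : ∀ i, 0 < w i) (hwsum : ∑ i, w i ≤ 1)
    (v : A → Finset J → ℝ)
    (hmono : ∀ i, ∀ S T : Finset J, S ⊆ T → v i S ≤ v i T)
    (hsubmod : ∀ i, ∀ S T : Finset J, v i (S ∩ T) + v i (S ∪ T) ≤ v i S + v i T)
    (hv0 : ∀ i, v i ∅ = 0) (hvJ : ∀ i, 0 < v i (univ : Finset J))
    (ℓ : A → J) (hℓ : ∀ i, ∀ j : J, v i {j} ≤ v i {ℓ i})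
    (vb : A → Finset J → ℝ) (hvb : ∀ i S, vb i S = v i {ℓ i} + v i S)
    (R : A → Finset J)
    (hdisj : ∀ i k, i ≠ k → Disjoint (R i) (R k))
    (owner : J → A) (howner : ∀ j : J, j ∈ R (owner j))
    (ε' : ℝ) (hε' : 0 ≤ ε')
    (hloc : ∀ i k, i ≠ k → ∀ j ∈ R i,
      (vb i ((R i).erase j) / vb i (R i)) ^ (w i) *
        (vb k (R k ∪ {j}) / vb k (R k)) ^ (w k) ≤ 1 + ε')
    (p : J → ℝ)
    (hp : ∀ j : J, p j = w (owner j) *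
      Real.log (vb (owner j) (R (owner j)) / vb (owner j) ((R (owner j)).erase j))) :
    ∀ (i : A) (S : Finset J),
      v i S / max (v i (R i)) (v i {ℓ i})
        ≤ -1 + 2 * ((1 + ε') ^ ((S.card : ℝ) / w i) *
            Real.exp ((∑ j ∈ S, p j) / w i)) := by
  -- nonnegativity of v
  have vnonneg : ∀ m (T : Finset J), 0 ≤ v m T := fun m T => by
    have := hmono m ∅ T (empty_subset T); rwa [hv0] at this
  -- subadditivity
  have subadd : ∀ m (T : Finset J), v m T ≤ ∑ j ∈ T, v m {j} := by
    intro m T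
    induction T using Finset.induction_on with
    | empty => simp [hv0]
    | @insert a s ha ih =>
      have hsub := hsubmod m {a} s
      have hint : ({a} : Finset J) ∩ s = ∅ := by
        simp [Finset.singleton_inter_of_notMem ha]
      have hun : ({a} : Finset J) ∪ s = insert a s := by
        exact (Finset.insert_eq a s).symm
      rw [hint, hun, hv0] at hsub
      rw [Finset.sum_insert ha]
      linarith
  -- v i {ℓ i} > 0
  have hℓpos : ∀ m, 0 < v m {ℓ m} := by
    intro m
    by_contra h
    push_neg at h
    have h1 : v m (univ : Finset J) ≤ ∑ j : J, v m {j} := subadd m univ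
    have h2 : ∑ j : J, v m {j} ≤ ∑ _j : J, v m {ℓ m} :=
      Finset.sum_le_sum (fun j _ => hℓ m j)
    have h3 : ∑ _j : J, v m {ℓ m} ≤ 0 := by
      apply Finset.sum_nonpos; intro j _; exact h
    have := hvJ m
    linarith
  have vbpos : ∀ m (T : Finset J), 0 < vb m T := fun m T => by
    rw [hvb]; exact add_pos_of_pos_of_nonneg (hℓpos m) (vnonneg m T)
  -- prices are nonnegative
  have hpnn : ∀ j, 0 ≤ p j := by
    intro j
    rw [hp j]
    have h1 : vb (owner j) ((R (owner j)).erase j) ≤ vb (owner j) (R (owner j)) := by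
      rw [hvb, hvb]
      have := hmono (owner j) ((R (owner j)).erase j) (R (owner j)) (Finset.erase_subset _ _)
      linarith
    have h2 : (1:ℝ) ≤ vb (owner j) (R (owner j)) / vb (owner j) ((R (owner j)).erase j) :=
      (one_le_div (vbpos _ _)).mpr h1
    exact mul_nonneg (hw _).le (Real.log_nonneg h2)
  intro i S
  set x : J → ℝ := fun j => ((1 + ε') * Real.exp (p j)) ^ (1 / w i) with hxdef
  have hbase : ∀ j, (1:ℝ) ≤ (1 + ε') * Real.exp (p j) := by
    intro j
    have h1 : (1:ℝ) ≤ 1 + ε' := by linarith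
    have h2 : (1:ℝ) ≤ Real.exp (p j) := Real.one_le_exp (hpnn j)
    nlinarith
  have hx1 : ∀ j, 1 ≤ x j := by
    intro j
    have := Real.one_le_rpow (hbase j) (one_div_pos.mpr (hw i)).le
    simpa [hxdef] using this
  -- Claim A
  have claimA : ∀ j : J, v i (R i ∪ {j}) ≤ v i (R i) + vb i (R i) * (x j - 1) := by
    intro j
    by_cases h : owner j = i
    · have hj : j ∈ R i := h ▸ howner j
      have : R i ∪ {j} = R i := by
        apply Finset.union_eq_left.mpr; simp [hj]
      rw [this]
      have := mul_nonneg (vbpos i (R i)).le (sub_nonneg.mpr (hx1 j))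
      linarith
    · have hl := hloc (owner j) i h j (howner j)
      have hA1 : 0 < vb (owner j) ((R (owner j)).erase j) := vbpos _ _
      have hB1 : 0 < vb (owner j) (R (owner j)) := vbpos _ _
      have hA2 : 0 < vb i (R i ∪ {j}) := vbpos _ _
      have hB2 : 0 < vb i (R i) := vbpos _ _
      have hdivpos : 0 < vb (owner j) (R (owner j)) / vb (owner j) ((R (owner j)).erase j) :=
        div_pos hB1 hA1
      have hc : 0 < (vb (owner j) (R (owner j)) / vb (owner j) ((R (owner j)).erase j))
          ^ (w (owner j)) := Real.rpow_pos_of_pos hdivpos _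
      have hexp : Real.exp (p j) = (vb (owner j) (R (owner j)) /
          vb (owner j) ((R (owner j)).erase j)) ^ (w (owner j)) := by
        rw [hp j, Real.rpow_def_of_pos hdivpos, mul_comm]
      have hinv : (vb (owner j) ((R (owner j)).erase j) / vb (owner j) (R (owner j)))
          ^ (w (owner j)) = ((vb (owner j) (R (owner j)) /
          vb (owner j) ((R (owner j)).erase j)) ^ (w (owner j)))⁻¹ := by
        rw [← Real.inv_rpow (div_nonneg hB1.le hA1.le), inv_div]
      rw [hinv, inv_mul_eq_div] at hl
      have ht : (vb i (R i ∪ {j}) / vb i (R i)) ^ (w i)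
          ≤ (1 + ε') * ((vb (owner j) (R (owner j)) /
            vb (owner j) ((R (owner j)).erase j)) ^ (w (owner j))) :=
        (div_le_iff₀ hc).mp hl
      have h0 : 0 ≤ vb i (R i ∪ {j}) / vb i (R i) := (div_pos hA2 hB2).le
      have hratio : vb i (R i ∪ {j}) / vb i (R i) ≤ x j := by
        have hmonorp := Real.rpow_le_rpow (Real.rpow_nonneg h0 _) ht
          (one_div_pos.mpr (hw i)).le
        rw [one_div, Real.rpow_rpow_inv h0 (hw i).ne'] at hmonorp
        simpa [hxdef, hexp, one_div] using hmonorp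
      have hle : vb i (R i ∪ {j}) ≤ x j * vb i (R i) := (div_le_iff₀ hB2).mp hratio
      have e1 : vb i (R i ∪ {j}) = v i {ℓ i} + v i (R i ∪ {j}) := hvb i _
      have e2 : vb i (R i) = v i {ℓ i} + v i (R i) := hvb i _
      nlinarith [hle, e1, e2]
  -- Claim B
  have claimB : ∀ T : Finset J,
      v i (R i ∪ T) ≤ v i (R i) + ∑ j ∈ T, (v i (R i ∪ {j}) - v i (R i)) := by
    intro T
    induction T using Finset.induction_on with
    | empty => simp
    | @insert a s ha ih =>
      have hsub := hsubmod i (R i ∪ s) (R i ∪ {a})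
      have hun : (R i ∪ s) ∪ (R i ∪ {a}) = R i ∪ insert a s := by
        ext y; simp [Finset.mem_insert]; tauto
      have hintsub : R i ⊆ (R i ∪ s) ∩ (R i ∪ {a}) :=
        Finset.subset_inter Finset.subset_union_left Finset.subset_union_left
      have hintv := hmono i _ _ hintsub
      rw [hun] at hsub
      rw [Finset.sum_insert ha]
      linarith
  -- products at least one
  have hP1 : ∀ T : Finset J, (1:ℝ) ≤ ∏ j ∈ T, x j := by
    intro T
    calc (1:ℝ) = ∏ _j ∈ T, (1:ℝ) := by simp
    _ ≤ ∏ j ∈ T, x j := Finset.prod_le_prod (fun _ _ => zero_le_one) (fun j _ => hx1 j)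
  -- Claim C
  have claimC : ∀ T : Finset J, ∑ j ∈ T, (x j - 1) ≤ (∏ j ∈ T, x j) - 1 := by
    intro T
    induction T using Finset.induction_on with
    | empty => simp
    | @insert a s ha ih =>
      rw [Finset.sum_insert ha, Finset.prod_insert ha]
      nlinarith [hx1 a, hP1 s]
  -- Claim D
  have claimD : ∏ j ∈ S, x j = (1 + ε') ^ ((S.card : ℝ) / w i) *
      Real.exp ((∑ j ∈ S, p j) / w i) := by
    have hnn : ∀ j ∈ S, (0:ℝ) ≤ (1 + ε') * Real.exp (p j) :=
      fun j _ => le_trans zero_le_one (hbase j)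
    rw [show (∏ j ∈ S, x j) = ∏ j ∈ S, ((1 + ε') * Real.exp (p j)) ^ (1 / w i) from rfl,
      Real.finset_prod_rpow S _ hnn (1 / w i), Finset.prod_mul_distrib,
      Finset.prod_const, ← Real.exp_sum,
      Real.mul_rpow (by positivity) (Real.exp_nonneg _)]
    congr 1
    · rw [← Real.rpow_natCast (1 + ε') S.card, ← Real.rpow_mul (by linarith), mul_one_div]
    · rw [← Real.exp_mul, mul_one_div]
  -- finish
  have hM : 0 < max (v i (R i)) (v i {ℓ i}) :=
    lt_of_lt_of_le (hℓpos i) (le_max_right _ _)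
  have hvS : v i S ≤ v i (R i ∪ S) := hmono i S _ Finset.subset_union_right
  have hsum1 : ∑ j ∈ S, (v i (R i ∪ {j}) - v i (R i)) ≤ vb i (R i) * ∑ j ∈ S, (x j - 1) := by
    rw [Finset.mul_sum]
    exact Finset.sum_le_sum (fun j _ => by nlinarith [claimA j])
  have h2 : vb i (R i) * ∑ j ∈ S, (x j - 1) ≤ vb i (R i) * ((∏ j ∈ S, x j) - 1) :=
    mul_le_mul_of_nonneg_left (claimC S) (vbpos i (R i)).le
  have hvb2 : vb i (R i) ≤ 2 * max (v i (R i)) (v i {ℓ i}) := by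
    have h3 := le_max_left (v i (R i)) (v i {ℓ i})
    have h4 := le_max_right (v i (R i)) (v i {ℓ i})
    rw [hvb]; linarith
  have hvRiM : v i (R i) ≤ max (v i (R i)) (v i {ℓ i}) := le_max_left _ _
  rw [div_le_iff₀ hM, ← claimD]
  nlinarith [hvS, claimB S, hsum1, h2, hP1 S, hvb2, hvRiM, hM]
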